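/- For the 2-chain-to-i-star family, among binary matrices x : {0,…,i} × {0,1,2} → {0,1} in which every row has at most one 1 (interpreted as each of the i+1 star nodes being unmapped or mapped to one of three chain nodes uniformly), the fraction of 'zero' states equals (1/2)·(1 + (3/4)^i), and the fraction of 'negative' states equals (1/2)·(1 − (3/4)^i). A state is negative iff the central node (row 0) is mapped to chain node 0 or 1 and at least one row k ∈ {1,…,i} is mapped to chain node 1 or 2, respectively. -/
import Mathlib

lemma card_exists_eq (i : ℕ) (c : Fin 4) :
    Nat.card {f : Fin i → Fin 4 // ∃ j, f j = c} = 4 ^ i - 3 ^ i := by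
  classical
  rw [Nat.card_eq_fintype_card]
  have h1 : Fintype.card {f : Fin i → Fin 4 // ∀ j, ¬ f j = c} = 3 ^ i := by
    rw [Fintype.card_congr (Equiv.subtypePiEquivPi (p := fun (_ : Fin i) (b : Fin 4) => ¬ b = c)),
      Fintype.card_pi]
    simp [Fintype.card_subtype_compl, Fintype.card_subtype_eq]
  have h2 : Fintype.card {f : Fin i → Fin 4 // ¬ ∀ j, ¬ f j = c} = 4 ^ i - 3 ^ i := by
    rw [Fintype.card_subtype_compl, h1]
    simp
  rw [← h2]
  exact Fintype.card_congr (Equiv.subtypeEquivRight (fun f => by push_neg; tauto))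

def eFix {α β : Type*} (a : α) (P : β → Prop) :
    {p : α × β // p.1 = a ∧ P p.2} ≃ {f : β // P f} where
  toFun x := ⟨x.1.2, x.2.2⟩
  invFun f := ⟨(a, f.1), rfl, f.2⟩
  left_inv := by rintro ⟨⟨x, f⟩, rfl, h⟩; rfl
  right_inv := by rintro ⟨f, h⟩; rfl

lemma card_neg (i : ℕ) :
    Nat.card {r : Fin (i + 1) → Fin 4 // (r 0 = 1 ∧ ∃ k : Fin (i + 1), k ≠ 0 ∧ r k = 2) ∨
      (r 0 = 2 ∧ ∃ k : Fin (i + 1), k ≠ 0 ∧ r k = 3)} = 2 * (4 ^ i - 3 ^ i) := by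
  classical
  set Q1 : Fin 4 × (Fin i → Fin 4) → Prop := fun p => p.1 = 1 ∧ ∃ j, p.2 j = 2 with hQ1
  set Q2 : Fin 4 × (Fin i → Fin 4) → Prop := fun p => p.1 = 2 ∧ ∃ j, p.2 j = 3 with hQ2
  have e1 : {r : Fin (i + 1) → Fin 4 // (r 0 = 1 ∧ ∃ k : Fin (i + 1), k ≠ 0 ∧ r k = 2) ∨
      (r 0 = 2 ∧ ∃ k : Fin (i + 1), k ≠ 0 ∧ r k = 3)} ≃ {p // Q1 p ∨ Q2 p} := by
    refine ((Fin.consEquiv (fun _ : Fin (i+1) => Fin 4)).symm.subtypeEquiv) fun r => ?_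
    have key : ∀ c : Fin 4, (∃ k : Fin (i+1), k ≠ 0 ∧ r k = c) ↔ ∃ j : Fin i, r j.succ = c := by
      intro c
      rw [Fin.exists_fin_succ]
      simp [Fin.succ_ne_zero]
    simp only [hQ1, hQ2, Fin.consEquiv, Equiv.coe_fn_symm_mk, Fin.tail, key]
  have hd : Disjoint Q1 Q2 := by
    rw [Pi.disjoint_iff]
    intro p
    by_cases h : p.1 = 1 <;> simp [hQ1, hQ2, Prop.disjoint_iff] <;> intro h' <;> simp_all
  rw [Nat.card_congr e1, Nat.card_congr (subtypeOrEquiv Q1 Q2 hd), Nat.card_sum,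
    Nat.card_congr (eFix (1 : Fin 4) (fun f : Fin i → Fin 4 => ∃ j, f j = 2)),
    Nat.card_congr (eFix (2 : Fin 4) (fun f : Fin i → Fin 4 => ∃ j, f j = 3)),
    card_exists_eq, card_exists_eq]
  ring

/-- A state of the 2-chain-to-i-star family: each of the `i+1` rows takes one of
4 values (`0` = zero row, `1,2,3` = indicator of chain node 0, 1, 2). A state is
'negative' iff the central node (row 0) is mapped to chain node 0 and some leaf
row `k ≠ 0` is mapped to chain node 1, or row 0 is mapped to chain node 1 and
some leaf row is mapped to chain node 2. -/
def negState (i : ℕ) (r : Fin (i + 1) → Fin 4) : Prop :=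
  (r 0 = 1 ∧ ∃ k : Fin (i + 1), k ≠ 0 ∧ r k = 2) ∨
  (r 0 = 2 ∧ ∃ k : Fin (i + 1), k ≠ 0 ∧ r k = 3)

/-- Under the uniform distribution on the `4^{i+1}` valid matrices
(each row independently one of 4 equally likely values), the fraction of
'negative' states equals `(1/2)·(1 − (3/4)^i)` and the fraction of 'zero'
(non-negative) states equals `(1/2)·(1 + (3/4)^i)`. -/
theorem stmt14 (i : ℕ) (hi : 1 ≤ i) :
    ((Nat.card {r : Fin (i + 1) → Fin 4 // negState i r} : ℝ) / 4 ^ (i + 1)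
        = (1 / 2) * (1 - (3 / 4) ^ i))
    ∧ ((Nat.card {r : Fin (i + 1) → Fin 4 // ¬ negState i r} : ℝ) / 4 ^ (i + 1)
        = (1 / 2) * (1 + (3 / 4) ^ i)) := by
  classical
  have h1 : Nat.card {r : Fin (i + 1) → Fin 4 // negState i r} = 2 * (4 ^ i - 3 ^ i) := by
    simpa [negState] using card_neg i
  have hle : 3 ^ i ≤ 4 ^ i := Nat.pow_le_pow_left (by norm_num) i
  have h2 : Nat.card {r : Fin (i + 1) → Fin 4 // ¬ negState i r}
      = 4 ^ (i + 1) - 2 * (4 ^ i - 3 ^ i) := by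
    rw [Nat.card_eq_fintype_card, Fintype.card_subtype_compl]
    rw [← Nat.card_eq_fintype_card (α := {x : Fin (i+1) → Fin 4 // negState i x}), h1]
    congr 1
    simp [Fintype.card_fun]
  have hle2 : 2 * (4 ^ i - 3 ^ i) ≤ 4 ^ (i + 1) := by
    calc 2 * (4 ^ i - 3 ^ i) ≤ 2 * 4 ^ i := Nat.mul_le_mul_left _ (Nat.sub_le _ _)
      _ ≤ 4 ^ (i + 1) := by rw [pow_succ]; omega
  have h4 : ((4 : ℝ) ^ (i + 1)) ≠ 0 := by positivity
  constructor
  · rw [h1]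
    push_cast [Nat.cast_sub hle]
    rw [div_eq_iff h4, pow_succ]
    rw [show ((3 : ℝ) / 4) ^ i = 3 ^ i / 4 ^ i from div_pow 3 4 i]
    field_simp
    ring
  · rw [h2]
    push_cast [Nat.cast_sub hle2, Nat.cast_sub hle]
    rw [div_eq_iff h4, pow_succ]
    rw [show ((3 : ℝ) / 4) ^ i = 3 ^ i / 4 ^ i from div_pow 3 4 i]
    field_simp
    ring
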